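/- arXiv:math/0310289 — 2 statements merged into one kernel-verified Lean document; each statement's English description precedes it below -/
import Mathlib

section
/- Let x : Fin n → F be a nonzero vector all of whose entries lie in the image of the constant embedding 𝔽q → F, and let g ∈ GL n F. Then there exists E ∈ ℤᵐ⁰ with E ≠ 0 such that for every γ ∈ GL n F lying in GL n R, ‖x·(γ*g : Matrix (Fin n) (Fin n) F)‖ ≥ E. (Proposition 10, first part: a uniform positive lower bound over all γ ∈ GL n R.) -/
/- Setting: `F = 𝔽q((X))` is the field of formal Laurent series over a finite field `𝔽q`,
with valuation `v = Valued.v : F → WithZero (Multiplicative ℤ)` (normalized by `v X = ofAdd (-1)`), ring of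
integers `O = 𝔽q[[X]] = {f | v f ≤ 1}`. -/

open scoped Multiplicative

noncomputable section

variable (𝔽q : Type*) [Field 𝔽q] [Fintype 𝔽q]

/-- `F = 𝔽q((X))`, the field of formal Laurent series over `𝔽q`. -/
abbrev F : Type _ := LaurentSeries 𝔽q

/-- The uniformizer `X` of `F`. -/
def XX : F 𝔽q := ((PowerSeries.X : PowerSeries 𝔽q) : LaurentSeries 𝔽q)

/-- The sup-norm `‖x‖ = sup_i v (x i)` of a row vector over `F`. -/
def vnorm {n : ℕ} (x : Fin n → F 𝔽q) : WithZero (Multiplicative ℤ) :=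
  Finset.univ.sup fun i => Valued.v (x i)

/-- `f` lies in the ring of integers `O = 𝔽q[[X]]` iff `v f ≤ 1`. -/
def inO (f : F 𝔽q) : Prop := Valued.v f ≤ 1

/-- `f` lies in `R = 𝔽q[X⁻¹]`: a Laurent series with finite support contained in
nonpositive degrees. -/
def inR (f : F 𝔽q) : Prop := f.support.Finite ∧ ∀ d ∈ f.support, d ≤ 0

/-- `g ∈ GL n F` lies in `GL n O`: every entry of `g` and of `g⁻¹` lies in `O`. -/
def inGLO {n : ℕ} (g : GL (Fin n) (F 𝔽q)) : Prop :=
  (∀ i j, inO 𝔽q ((g : Matrix (Fin n) (Fin n) (F 𝔽q)) i j)) ∧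
  (∀ i j, inO 𝔽q ((↑(g⁻¹) : Matrix (Fin n) (Fin n) (F 𝔽q)) i j))

/-- `γ ∈ GL n F` lies in `GL n R`: every entry of `γ` and of `γ⁻¹` lies in `R`. -/
def inGLR {n : ℕ} (γ : GL (Fin n) (F 𝔽q)) : Prop :=
  (∀ i j, inR 𝔽q ((γ : Matrix (Fin n) (Fin n) (F 𝔽q)) i j)) ∧
  (∀ i j, inR 𝔽q ((↑(γ⁻¹) : Matrix (Fin n) (Fin n) (F 𝔽q)) i j))

lemma inR_zero : inR 𝔽q 0 := by
  constructor
  · simp [HahnSeries.support_zero]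
  · simp [HahnSeries.support_zero]

lemma inR_add {f g : F 𝔽q} (hf : inR 𝔽q f) (hg : inR 𝔽q g) : inR 𝔽q (f + g) := by
  refine ⟨(hf.1.union hg.1).subset (HahnSeries.support_add_subset _ _), fun d hd => ?_⟩
  rcases HahnSeries.support_add_subset _ _ hd with h | h
  · exact hf.2 d h
  · exact hg.2 d h

lemma inR_mul {f g : F 𝔽q} (hf : inR 𝔽q f) (hg : inR 𝔽q g) : inR 𝔽q (f * g) := by
  refine ⟨((hf.1.add hg.1)).subset HahnSeries.support_mul_subset,
    fun d hd => ?_⟩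
  obtain ⟨a, ha, b, hb, rfl⟩ := HahnSeries.support_mul_subset hd
  exact add_nonpos (hf.2 a ha) (hg.2 b hb)

lemma inR_C (c : 𝔽q) : inR 𝔽q (HahnSeries.C c) := by
  refine ⟨Set.Finite.subset (Set.finite_singleton 0) ?_, fun d hd => ?_⟩
  · exact HahnSeries.support_single_subset
  · have := HahnSeries.support_single_subset hd
    simp only [Set.mem_singleton_iff] at this
    simp [this]

/-- A nonzero element of `R` has valuation at least `1`. -/
lemma one_le_v_of_inR {f : F 𝔽q} (hf : inR 𝔽q f) (h0 : f ≠ 0) :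
    (1 : WithZero (Multiplicative ℤ)) ≤ Valued.v f := by
  by_contra hlt
  push_neg at hlt
  have hle : Valued.v f ≤ (Multiplicative.ofAdd (-1 : ℤ) : Multiplicative ℤ) := by
    rcases eq_or_ne (Valued.v f) 0 with h0' | h0'
    · rw [h0']; exact zero_le'
    · obtain ⟨a, ha⟩ := WithZero.ne_zero_iff_exists.mp h0'
      rw [← ha] at hlt ⊢
      rw [WithZero.coe_le_coe]
      rw [← WithZero.coe_one, WithZero.coe_lt_coe] at hlt
      have h2 : Multiplicative.toAdd a < 0 := hlt
      have h3 : Multiplicative.toAdd a ≤ -1 := by omega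
      exact h3
  apply h0
  ext d
  rcases le_or_gt d 0 with hd | hd
  · exact LaurentSeries.coeff_zero_of_lt_valuation 𝔽q hle (by omega)
  · by_contra hc
    have : d ≤ 0 := hf.2 d hc
    omega

set_option maxHeartbeats 1000000 in
/-- **Proposition 10, first part.** If `x` is a nonzero vector with constant entries
(in the image of `𝔽q → F`) and `g ∈ GL n F`, then there is a uniform positive lower
bound `E` for `‖x ⬝ (γ * g)‖` over all `γ ∈ GL n R`. -/
theorem exists_lower_bound (n : ℕ) (hn : 0 < n)
    (x : Fin n → F 𝔽q) (hx : x ≠ 0)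
    (hxconst : ∀ i, ∃ c : 𝔽q, x i = HahnSeries.C c)
    (g : GL (Fin n) (F 𝔽q)) :
    ∃ E : WithZero (Multiplicative ℤ), E ≠ 0 ∧ ∀ γ : GL (Fin n) (F 𝔽q), inGLR 𝔽q γ →
      E ≤ vnorm 𝔽q (Matrix.vecMul x
        ((γ * g : GL (Fin n) (F 𝔽q)) : Matrix (Fin n) (Fin n) (F 𝔽q))) := by
  classical
  set h : Matrix (Fin n) (Fin n) (F 𝔽q) := (↑(g⁻¹) : Matrix (Fin n) (Fin n) (F 𝔽q)) with hh
  set M : WithZero (Multiplicative ℤ) := Finset.univ.sup (fun p : Fin n × Fin n => Valued.v (h p.1 p.2)) with hM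
  have hMne : M ≠ 0 := by
    intro hM0
    have hzero : ∀ i j, h i j = 0 := by
      intro i j
      have : Valued.v (h i j) ≤ M := by
        rw [hM]; apply Finset.le_sup (f := fun p : Fin n × Fin n => Valued.v (h p.1 p.2)) (Finset.mem_univ (i, j))
      rw [hM0] at this
      have : Valued.v (h i j) = 0 := le_antisymm this zero_le'
      exact (Valuation.zero_iff _).mp this
    have h1 : h * (↑g : Matrix (Fin n) (Fin n) (F 𝔽q)) = 1 := by
      rw [hh]; exact g.inv_mul
    have hz : h = 0 := funext fun i => funext fun j => hzero i j
    rw [hz, Matrix.zero_mul] at h1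
    have i0 : Fin n := ⟨0, hn⟩
    have : (0 : Matrix (Fin n) (Fin n) (F 𝔽q)) i0 i0 = (1 : Matrix (Fin n) (Fin n) (F 𝔽q)) i0 i0 := by
      rw [h1]
    simp [Matrix.one_apply] at this
  refine ⟨M⁻¹, inv_ne_zero hMne, fun γ hγ => ?_⟩
  set y : Fin n → F 𝔽q := Matrix.vecMul x (↑γ : Matrix (Fin n) (Fin n) (F 𝔽q)) with hy
  set z : Fin n → F 𝔽q :=
    Matrix.vecMul x ((γ * g : GL (Fin n) (F 𝔽q)) : Matrix (Fin n) (Fin n) (F 𝔽q)) with hz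
  -- y = z ⬝ g⁻¹
  have hyz : y = Matrix.vecMul z h := by
    rw [hy, hz, hh, Matrix.vecMul_vecMul, ← Units.val_mul, mul_inv_cancel_right]
  -- entries of y are in R
  have hyR : ∀ i, inR 𝔽q (y i) := by
    intro i
    rw [hy]
    simp only [Matrix.vecMul, dotProduct]
    apply Finset.sum_induction _ (inR 𝔽q) (fun a b => inR_add 𝔽q) (inR_zero 𝔽q)
    intro j _
    obtain ⟨c, hc⟩ := hxconst j
    exact inR_mul 𝔽q (hc ▸ inR_C 𝔽q c) (hγ.1 j i)
  -- y ≠ 0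
  have hyne : y ≠ 0 := by
    intro h0
    apply hx
    have : Matrix.vecMul y (↑(γ⁻¹) : Matrix (Fin n) (Fin n) (F 𝔽q)) = x := by
      rw [hy, Matrix.vecMul_vecMul]
      rw [γ.mul_inv, Matrix.vecMul_one]
    rw [← this, h0, Matrix.zero_vecMul]
  -- 1 ≤ vnorm y
  obtain ⟨i, hi⟩ : ∃ i, y i ≠ 0 := by
    by_contra hc
    push_neg at hc
    exact hyne (funext hc)
  have hle1 : Valued.v (y i) ≤ vnorm 𝔽q y := by
    rw [vnorm]; apply Finset.le_sup (Finset.mem_univ i)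
  have h1y : (1 : WithZero (Multiplicative ℤ)) ≤ vnorm 𝔽q y :=
    le_trans (one_le_v_of_inR 𝔽q (hyR i) hi) hle1
  -- vnorm y ≤ vnorm z * M
  have hkey : vnorm 𝔽q y ≤ vnorm 𝔽q z * M := by
    apply Finset.sup_le
    intro i _
    rw [hyz]
    simp only [Matrix.vecMul, dotProduct]
    apply Valuation.map_sum_le
    intro j _
    rw [Valuation.map_mul]
    have hz1 : Valued.v (z j) ≤ vnorm 𝔽q z := by
      rw [vnorm]; apply Finset.le_sup (Finset.mem_univ j)
    have hz2 : Valued.v (h j i) ≤ M := by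
      rw [hM]; apply Finset.le_sup (f := fun p : Fin n × Fin n => Valued.v (h p.1 p.2)) (Finset.mem_univ (j, i))
    exact mul_le_mul' hz1 hz2
  have : (1 : WithZero (Multiplicative ℤ)) ≤ vnorm 𝔽q z * M := le_trans h1y hkey
  calc M⁻¹ = 1 * M⁻¹ := (one_mul _).symm
    _ ≤ vnorm 𝔽q z * M * M⁻¹ := mul_le_mul_left this _
    _ = vnorm 𝔽q z := by rw [mul_assoc, mul_inv_cancel₀ hMne, mul_one]
end
end

section
/- Let a, b : Fin n → ℤ be monotone functions and let D_a, D_b be the diagonal matrices over F with (D_a) i i = X^(a i) and (D_b) i i = X^(b i). If there exist γ ∈ GL n F lying in GL n R and k ∈ GL n F lying in GL n O with D_a = γ * D_b * k, then a = b. (Theorem 2 for GL n, uniqueness: distinct antidominant diagonal matrices of powers of X lie in distinct double cosets GL_n(R) \ GL_n(F) / GL_n(O).) -/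
/- Setting: `F = 𝔽q((X))` is the field of formal Laurent series over a finite field `𝔽q`,
with valuation `v = Valued.v : F → ℤₘ₀` (normalized by `v X = ofAdd (-1)`), ring of
integers `O = 𝔽q[[X]] = {f | v f ≤ 1}`. -/

open scoped Multiplicative

noncomputable section

variable (𝔽q : Type*) [Field 𝔽q] [Fintype 𝔽q]

lemma val_XX_zpow (m : ℤ) :
    Valued.v ((XX 𝔽q) ^ m) = (↑(Multiplicative.ofAdd (-m)) : WithZero (Multiplicative ℤ)) := by
  have h1 : Valued.v (XX 𝔽q) = (↑(Multiplicative.ofAdd (-1 : ℤ)) : WithZero (Multiplicative ℤ)) := by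
    simpa [XX, WithZero.exp] using LaurentSeries.valuation_X_pow (K := 𝔽q) 1
  rw [map_zpow₀, h1, ← WithZero.coe_zpow]
  congr 1
  rw [show (-m : ℤ) = (-1) * m by ring, Int.ofAdd_mul]

lemma vanish (m l : ℤ) (c f : F 𝔽q) (hc : inO 𝔽q c) (hf : inR 𝔽q f)
    (heq : f * XX 𝔽q ^ l = XX 𝔽q ^ m * c) (hlm : l < m) : f = 0 := by
  have hv : Valued.v f ≤ (↑(Multiplicative.ofAdd (-(m - l))) : WithZero (Multiplicative ℤ)) := by
    have h2 : Valued.v f * Valued.v (XX 𝔽q ^ l) ≤ Valued.v (XX 𝔽q ^ m) * 1 := by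
      rw [← map_mul, heq, map_mul]
      exact mul_le_mul_right hc _
    rw [val_XX_zpow, val_XX_zpow, mul_one] at h2
    have h3 := mul_le_mul_left h2 (↑(Multiplicative.ofAdd (l : ℤ)) : WithZero (Multiplicative ℤ))
    rw [mul_assoc, ← WithZero.coe_mul, ← WithZero.coe_mul, ← ofAdd_add, ← ofAdd_add,
      neg_add_cancel, ofAdd_zero, WithZero.coe_one, mul_one] at h3
    rw [show -(m - l) = -m + l by ring]
    exact h3
  ext d
  by_cases hd : d < m - l
  · simpa using LaurentSeries.coeff_zero_of_lt_valuation (K := 𝔽q) hv hd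
  · simp only [HahnSeries.coeff_zero]
    by_contra hne
    have := hf.2 d hne
    omega

lemma det_zero_of_block {n : ℕ} (a b : Fin n → ℤ) (ha : Monotone a) (hb : Monotone b)
    (M : Matrix (Fin n) (Fin n) (F 𝔽q)) (hz : ∀ i j, b j < a i → M i j = 0)
    (i0 : Fin n) (hi0 : b i0 < a i0) : M.det = 0 := by
  rw [Matrix.det_apply]
  apply Finset.sum_eq_zero
  intro σ _
  have hex : ∃ j, j ≤ i0 ∧ i0 ≤ σ j := by
    by_contra hcon
    push_neg at hcon
    have hmaps : ∀ j ∈ Finset.Iic i0, σ j ∈ Finset.Iio i0 := by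
      intro j hj
      simp only [Finset.mem_Iio]
      exact hcon j (Finset.mem_Iic.mp hj)
    have hcard := Finset.card_le_card_of_injOn σ hmaps (σ.injective.injOn)
    rw [Fin.card_Iic, Fin.card_Iio] at hcard
    omega
  obtain ⟨j, hj1, hj2⟩ := hex
  have hprod : ∏ i, M (σ i) i = 0 :=
    Finset.prod_eq_zero (Finset.mem_univ j)
      (hz _ _ (lt_of_le_of_lt (hb hj1) (lt_of_lt_of_le hi0 (ha hj2))))
  simp [hprod, Units.smul_def]

lemma le_of_reduction {n : ℕ} (a b : Fin n → ℤ) (ha : Monotone a) (hb : Monotone b)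
    (M N : Matrix (Fin n) (Fin n) (F 𝔽q)) (hdet : M.det ≠ 0)
    (hMR : ∀ i j, inR 𝔽q (M i j)) (hNO : ∀ i j, inO 𝔽q (N i j))
    (heq : M * Matrix.diagonal (fun i => XX 𝔽q ^ (b i)) =
      Matrix.diagonal (fun i => XX 𝔽q ^ (a i)) * N) :
    ∀ i, a i ≤ b i := by
  intro i
  by_contra hlt
  push_neg at hlt
  apply hdet
  apply det_zero_of_block 𝔽q a b ha hb M _ i hlt
  intro i j hba
  have h1 := congrFun (congrFun heq i) j
  rw [Matrix.mul_diagonal, Matrix.diagonal_mul] at h1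
  exact vanish 𝔽q (a i) (b j) (N i j) (M i j) (hNO i j) (hMR i j) h1 hba

/-- **Theorem 2 for `GL n`, uniqueness:** distinct antidominant diagonal matrices of
powers of `X` lie in distinct double cosets `GL_n(R) \ GL_n(F) / GL_n(O)`. -/
theorem local_reduction_uniqueness (n : ℕ) (hn : 0 < n)
    (a b : Fin n → ℤ) (ha : Monotone a) (hb : Monotone b)
    (γ k : GL (Fin n) (F 𝔽q)) (hγ : inGLR 𝔽q γ) (hk : inGLO 𝔽q k)
    (h : Matrix.diagonal (fun i => XX 𝔽q ^ (a i)) =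
        (γ : Matrix (Fin n) (Fin n) (F 𝔽q)) *
          Matrix.diagonal (fun i => XX 𝔽q ^ (b i)) *
          (k : Matrix (Fin n) (Fin n) (F 𝔽q))) :
    a = b := by
  have h1 : (γ : Matrix (Fin n) (Fin n) (F 𝔽q)) *
      Matrix.diagonal (fun i => XX 𝔽q ^ (b i)) =
      Matrix.diagonal (fun i => XX 𝔽q ^ (a i)) * (↑(k⁻¹) : Matrix (Fin n) (Fin n) (F 𝔽q)) := by
    rw [h, mul_assoc, Units.mul_inv, mul_one]
  have h2 : (↑(γ⁻¹) : Matrix (Fin n) (Fin n) (F 𝔽q)) *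
      Matrix.diagonal (fun i => XX 𝔽q ^ (a i)) =
      Matrix.diagonal (fun i => XX 𝔽q ^ (b i)) * (k : Matrix (Fin n) (Fin n) (F 𝔽q)) := by
    rw [h, ← mul_assoc, ← mul_assoc, Units.inv_mul, one_mul]
  have hdet1 : ((γ : Matrix (Fin n) (Fin n) (F 𝔽q))).det ≠ 0 :=
    ((Matrix.isUnit_iff_isUnit_det _).mp γ.isUnit).ne_zero
  have hdet2 : ((↑(γ⁻¹) : Matrix (Fin n) (Fin n) (F 𝔽q))).det ≠ 0 :=
    ((Matrix.isUnit_iff_isUnit_det _).mp (γ⁻¹).isUnit).ne_zero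
  have hab := le_of_reduction 𝔽q a b ha hb _ _ hdet1 hγ.1 hk.2 h1
  have hba := le_of_reduction 𝔽q b a hb ha _ _ hdet2 hγ.2 hk.1 h2
  funext i
  exact le_antisymm (hab i) (hba i)
end
end
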